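/- For all vertices A, B of the Gaifman graph H, the distance between A and B in the modified graph H• satisfies dist_{H•}(A,B) ≤ 2·dist_H(A,B). -/

import Mathlib

open Finset

def IsRect (R : Set (ℝ × ℝ)) : Prop :=
  ∃ x1 x2 y1 y2 : ℝ, R = Set.Icc x1 x2 ×ˢ Set.Icc y1 y2

def IsSeg (R : Set (ℝ × ℝ)) : Prop :=
  ∃ x1 x2 y1 y2 : ℝ, (x1 = x2 ∨ y1 = y2) ∧ R = Set.Icc x1 x2 ×ˢ Set.Icc y1 y2

/-- A solution: a subset of `D` of cardinality at most `k` consisting of pairwise disjoint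
objects. -/
def IsSolution (D : Finset (Set (ℝ × ℝ))) (k : ℕ) (S : Finset (Set (ℝ × ℝ))) : Prop :=
  S ⊆ D ∧ S.card ≤ k ∧ (↑S : Set (Set (ℝ × ℝ))).Pairwise Disjoint

/-- `optk D ω k` : the maximum total `ω`-weight of a set of at most `k` pairwise disjoint
members of `D`. -/
noncomputable def optk (D : Finset (Set (ℝ × ℝ))) (ω : Set (ℝ × ℝ) → ℝ) (k : ℕ) : ℝ :=
  sSup {w : ℝ | ∃ S : Finset (Set (ℝ × ℝ)), IsSolution D k S ∧ w = ∑ R ∈ S, ω R}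

/-- The grid points of the grid with vertical lines at `x`-coordinates `V` and horizontal
lines at `y`-coordinates `Hl`. -/
def gridPoints (V Hl : Finset ℝ) : Set (ℝ × ℝ) := {p : ℝ × ℝ | p.1 ∈ V ∧ p.2 ∈ Hl}

/-- `a` and `b` are consecutive elements of `V` (with `a < b`). -/
def Consec (V : Finset ℝ) (a b : ℝ) : Prop :=
  a ∈ V ∧ b ∈ V ∧ a < b ∧ ∀ c ∈ V, ¬ (a < c ∧ c < b)

def SameOrConsec (V : Finset ℝ) (a b : ℝ) : Prop :=
  (a = b ∧ a ∈ V) ∨ Consec V a b ∨ Consec V b a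

/-- Two grid points are adjacent: they lie on the same or consecutive vertical lines,
and on the same or consecutive horizontal lines. -/
def AdjPts (V Hl : Finset ℝ) (p q : ℝ × ℝ) : Prop :=
  SameOrConsec V p.1 q.1 ∧ SameOrConsec Hl p.2 q.2

/-- `Q` is the set of corners of a grid cell of the grid `(V, Hl)`: a bounded cell has four
corners; cells in boundary strips have two corners; quadrant cells have one corner. -/
def IsCellCorners (V Hl : Finset ℝ) (Q : Set (ℝ × ℝ)) : Prop :=
  (∃ a b c d : ℝ, Consec V a b ∧ Consec Hl c d ∧
      Q = {(a, c), (a, d), (b, c), (b, d)}) ∨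
  (∃ a c d : ℝ, a ∈ V ∧ ((∀ x ∈ V, a ≤ x) ∨ (∀ x ∈ V, x ≤ a)) ∧ Consec Hl c d ∧
      Q = {(a, c), (a, d)}) ∨
  (∃ a b c : ℝ, Consec V a b ∧ c ∈ Hl ∧ ((∀ y ∈ Hl, c ≤ y) ∨ (∀ y ∈ Hl, y ≤ c)) ∧
      Q = {(a, c), (b, c)}) ∨
  (∃ a c : ℝ, a ∈ V ∧ c ∈ Hl ∧ ((∀ x ∈ V, a ≤ x) ∨ (∀ x ∈ V, x ≤ a)) ∧
      ((∀ y ∈ Hl, c ≤ y) ∨ (∀ y ∈ Hl, y ≤ c)) ∧ Q = {(a, c)})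

/-- The Gaifman graph `H` on the family `T` of sets of grid points: `A` and `B` are
adjacent iff some grid cell has a corner in `A` and a corner in `B`. -/
def gaifman (V Hl : Finset ℝ) (T : Set (Set (ℝ × ℝ))) : SimpleGraph T :=
  SimpleGraph.fromRel (fun A B => ∃ Q : Set (ℝ × ℝ), IsCellCorners V Hl Q ∧
    ((A : Set (ℝ × ℝ)) ∩ Q).Nonempty ∧ ((B : Set (ℝ × ℝ)) ∩ Q).Nonempty)

/-- `q = (a, b, c, d)` encodes a cross: a bounded cell (x-range `[a,b]`, y-range `[c,d]`)
whose four corners lie in four pairwise different elements of `T`. -/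
def IsCross (V Hl : Finset ℝ) (T : Set (Set (ℝ × ℝ))) (q : ℝ × ℝ × ℝ × ℝ) : Prop :=
  Consec V q.1 q.2.1 ∧ Consec Hl q.2.2.1 q.2.2.2 ∧
  ∃ A1 ∈ T, ∃ A2 ∈ T, ∃ A3 ∈ T, ∃ A4 ∈ T,
    (q.1, q.2.2.2) ∈ A1 ∧ (q.2.1, q.2.2.2) ∈ A2 ∧
    (q.1, q.2.2.1) ∈ A3 ∧ (q.2.1, q.2.2.1) ∈ A4 ∧
    A1 ≠ A2 ∧ A1 ≠ A3 ∧ A1 ≠ A4 ∧ A2 ≠ A3 ∧ A2 ≠ A4 ∧ A3 ≠ A4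

/-- `A` and `B` contain two opposite corners of some cross. -/
def DiagonalPair (V Hl : Finset ℝ) (T : Set (Set (ℝ × ℝ))) (A B : Set (ℝ × ℝ)) : Prop :=
  ∃ q : ℝ × ℝ × ℝ × ℝ, IsCross V Hl T q ∧
    (((q.1, q.2.2.2) ∈ A ∧ (q.2.1, q.2.2.1) ∈ B) ∨
     ((q.1, q.2.2.2) ∈ B ∧ (q.2.1, q.2.2.1) ∈ A) ∨
     ((q.2.1, q.2.2.2) ∈ A ∧ (q.1, q.2.2.1) ∈ B) ∨
     ((q.2.1, q.2.2.2) ∈ B ∧ (q.1, q.2.2.1) ∈ A))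

/-- The modified graph `H•`: for each cross add a new vertex adjacent to the four elements
of `T` containing its corners, and delete the two diagonal edges of the cross. -/
def gaifmanDot (V Hl : Finset ℝ) (T : Set (Set (ℝ × ℝ))) :
    SimpleGraph (T ⊕ {q : ℝ × ℝ × ℝ × ℝ // IsCross V Hl T q}) :=
  SimpleGraph.fromRel (fun u v =>
    match u, v with
    | Sum.inl A, Sum.inl B =>
        (gaifman V Hl T).Adj A B ∧ ¬ DiagonalPair V Hl T (A : Set (ℝ × ℝ)) (B : Set (ℝ × ℝ))
    | Sum.inl A, Sum.inr q =>
        (q.1.1, q.1.2.2.2) ∈ (A : Set (ℝ × ℝ)) ∨ (q.1.2.1, q.1.2.2.2) ∈ (A : Set (ℝ × ℝ)) ∨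
        (q.1.1, q.1.2.2.1) ∈ (A : Set (ℝ × ℝ)) ∨ (q.1.2.1, q.1.2.2.1) ∈ (A : Set (ℝ × ℝ))
    | Sum.inr _, _ => False)

/-- Graph minors: `G` is a minor of `G'` if there are pairwise disjoint connected branch
sets in `G'`, one for each vertex of `G`, with edges of `G` realized between branch sets. -/
def IsMinorOf {α β : Type} (G : SimpleGraph α) (G' : SimpleGraph β) : Prop :=
  ∃ f : α → Set β,
    (∀ a, (G'.induce (f a)).Connected) ∧
    (∀ a a', a ≠ a' → Disjoint (f a) (f a')) ∧
    (∀ a a', G.Adj a a' → ∃ x ∈ f a, ∃ y ∈ f a', G'.Adj x y)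

/-- Planarity, via Wagner's forbidden-minor characterization. -/
def IsPlanar {α : Type} (G : SimpleGraph α) : Prop :=
  ¬ IsMinorOf (SimpleGraph.completeGraph (Fin 5)) G ∧
  ¬ IsMinorOf (completeBipartiteGraph (Fin 3) (Fin 3)) G

section Aux

variable (V Hl : Finset ℝ) (T : Set (Set (ℝ × ℝ)))

/-- The corner set of the cell of a cross. -/
def cellSet (q : ℝ × ℝ × ℝ × ℝ) : Set (ℝ × ℝ) :=
  {(q.1, q.2.2.1), (q.1, q.2.2.2), (q.2.1, q.2.2.1), (q.2.1, q.2.2.2)}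

variable {V Hl T}

lemma cellSet_isCellCorners {q : ℝ × ℝ × ℝ × ℝ} (hq : IsCross V Hl T q) :
    IsCellCorners V Hl (cellSet q) := by
  left
  exact ⟨q.1, q.2.1, q.2.2.1, q.2.2.2, hq.1, hq.2.1, rfl⟩

lemma adj_inl_inr_iff {A : T} {q : {q : ℝ × ℝ × ℝ × ℝ // IsCross V Hl T q}} :
    (gaifmanDot V Hl T).Adj (Sum.inl A) (Sum.inr q) ↔
      ((A : Set (ℝ × ℝ)) ∩ cellSet q.1).Nonempty := by
  constructor
  · intro h
    rw [gaifmanDot, SimpleGraph.fromRel_adj] at h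
    obtain ⟨-, h | h⟩ := h
    · simp only [] at h
      rcases h with h | h | h | h
      · exact ⟨_, h, by unfold cellSet; simp⟩
      · exact ⟨_, h, by unfold cellSet; simp⟩
      · exact ⟨_, h, by unfold cellSet; simp⟩
      · exact ⟨_, h, by unfold cellSet; simp⟩
    · simp only [] at h
  · rintro ⟨p, hpA, hp⟩
    rw [gaifmanDot, SimpleGraph.fromRel_adj]
    refine ⟨by simp, Or.inl ?_⟩
    simp only []
    unfold cellSet at hp
    simp only [Set.mem_insert_iff, Set.mem_singleton_iff] at hp
    rcases hp with h | h | h | h <;> rw [h] at hpA <;> tauto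

lemma not_adj_inr_inr {q q' : {q : ℝ × ℝ × ℝ × ℝ // IsCross V Hl T q}} :
    ¬ (gaifmanDot V Hl T).Adj (Sum.inr q) (Sum.inr q') := by
  intro h
  rw [gaifmanDot, SimpleGraph.fromRel_adj] at h
  obtain ⟨-, h | h⟩ := h <;> exact h

lemma gaifman_adj_of_cell {A B : T} (hAB : A ≠ B) {Q : Set (ℝ × ℝ)}
    (hQ : IsCellCorners V Hl Q) (hA : ((A : Set (ℝ × ℝ)) ∩ Q).Nonempty)
    (hB : ((B : Set (ℝ × ℝ)) ∩ Q).Nonempty) : (gaifman V Hl T).Adj A B := by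
  rw [gaifman, SimpleGraph.fromRel_adj]
  exact ⟨hAB, Or.inl ⟨Q, hQ, hA, hB⟩⟩

/-- One H-edge is covered by an H•-walk of length at most 2. -/
lemma edge_case {A B : T} (h : (gaifman V Hl T).Adj A B) :
    ∃ w : (gaifmanDot V Hl T).Walk (Sum.inl A) (Sum.inl B), w.length ≤ 2 := by
  have hne : A ≠ B := h.ne
  by_cases hd : DiagonalPair V Hl T (A : Set (ℝ × ℝ)) (B : Set (ℝ × ℝ))
  · obtain ⟨q, hq, hcase⟩ := hd
    have hA : (gaifmanDot V Hl T).Adj (Sum.inl A) (Sum.inr ⟨q, hq⟩) := by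
      rw [adj_inl_inr_iff]
      rcases hcase with ⟨h1, -⟩ | ⟨-, h1⟩ | ⟨h1, -⟩ | ⟨-, h1⟩ <;>
        exact ⟨_, h1, by unfold cellSet; simp⟩
    have hB : (gaifmanDot V Hl T).Adj (Sum.inr ⟨q, hq⟩) (Sum.inl B) := by
      rw [SimpleGraph.adj_comm, adj_inl_inr_iff]
      rcases hcase with ⟨-, h1⟩ | ⟨h1, -⟩ | ⟨-, h1⟩ | ⟨h1, -⟩ <;>
        exact ⟨_, h1, by unfold cellSet; simp⟩
    exact ⟨SimpleGraph.Walk.cons hA (SimpleGraph.Walk.cons hB SimpleGraph.Walk.nil), by simp⟩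
  · have : (gaifmanDot V Hl T).Adj (Sum.inl A) (Sum.inl B) := by
      rw [gaifmanDot, SimpleGraph.fromRel_adj]
      refine ⟨by simpa using hne, Or.inl ?_⟩
      exact ⟨h, hd⟩
    exact ⟨SimpleGraph.Walk.cons this SimpleGraph.Walk.nil, by simp⟩

/-- Any H-walk is covered by an H•-walk of at most twice the length. -/
lemma walk_case {A B : T} (p : (gaifman V Hl T).Walk A B) :
    ∃ w : (gaifmanDot V Hl T).Walk (Sum.inl A) (Sum.inl B), w.length ≤ 2 * p.length := by
  induction p with
  | nil => exact ⟨SimpleGraph.Walk.nil, by simp⟩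
  | cons h p ih =>
    obtain ⟨w1, hw1⟩ := edge_case h
    obtain ⟨w2, hw2⟩ := ih
    refine ⟨w1.append w2, ?_⟩
    rw [SimpleGraph.Walk.length_append, SimpleGraph.Walk.length_cons]
    omega

/-- Reachability in H• between original vertices implies reachability in H. -/
lemma proj_reachable :
    ∀ {x y : T ⊕ {q : ℝ × ℝ × ℝ × ℝ // IsCross V Hl T q}},
      (w : (gaifmanDot V Hl T).Walk x y) → ∀ (B : T), y = Sum.inl B →
      (∀ A : T, x = Sum.inl A → (gaifman V Hl T).Reachable A B) ∧
      (∀ q : {q : ℝ × ℝ × ℝ × ℝ // IsCross V Hl T q}, x = Sum.inr q →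
        ∀ A : T, ((A : Set (ℝ × ℝ)) ∩ cellSet q.1).Nonempty →
          (gaifman V Hl T).Reachable A B) := by
  intro x y w
  induction w with
  | nil =>
    intro B hB
    constructor
    · intro A hA
      rw [hB] at hA
      rw [Sum.inl.injEq] at hA
      exact hA ▸ SimpleGraph.Reachable.refl _
    · intro q hq
      rw [hB] at hq; exact absurd hq (by simp)
  | @cons x x' y hadj w ih =>
    intro B hB
    have ih' := ih B hB
    constructor
    · intro A hA
      subst hA
      cases x' with
      | inl A' =>
        have hadj' : (gaifman V Hl T).Adj A A' := by
          rw [gaifmanDot, SimpleGraph.fromRel_adj] at hadj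
          obtain ⟨-, h | h⟩ := hadj <;> simp only [] at h
          · exact h.1
          · exact h.1.symm
        exact hadj'.reachable.trans (ih'.1 A' rfl)
      | inr q =>
        exact ih'.2 q rfl A (adj_inl_inr_iff.mp hadj)
    · intro q hq A hAQ
      subst hq
      cases x' with
      | inl A' =>
        have hA' : ((A' : Set (ℝ × ℝ)) ∩ cellSet q.1).Nonempty :=
          adj_inl_inr_iff.mp hadj.symm
        have hr : (gaifman V Hl T).Reachable A A' := by
          by_cases hAA : A = A'
          · exact hAA ▸ SimpleGraph.Reachable.refl _
          · exact (gaifman_adj_of_cell hAA (cellSet_isCellCorners q.2) hAQ hA').reachable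
        exact hr.trans (ih'.1 A' rfl)
      | inr q' => exact absurd hadj not_adj_inr_inr

end Aux

/-- distances in `H•` are at most twice the distances in `H`. -/
theorem stmt7 (V Hl : Finset ℝ) (T : Set (Set (ℝ × ℝ)))
    (hne : ∀ A ∈ T, A.Nonempty) (hsub : ∀ A ∈ T, A ⊆ gridPoints V Hl)
    (hdisj : T.Pairwise Disjoint) :
    ∀ A B : T, (gaifmanDot V Hl T).dist (Sum.inl A) (Sum.inl B) ≤
      2 * (gaifman V Hl T).dist A B := by
  intro A B
  by_cases hreach : (gaifman V Hl T).Reachable A B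
  · obtain ⟨p, hp⟩ := hreach.exists_walk_length_eq_dist
    obtain ⟨w, hw⟩ := walk_case p
    calc (gaifmanDot V Hl T).dist (Sum.inl A) (Sum.inl B) ≤ w.length :=
          SimpleGraph.dist_le w
      _ ≤ 2 * p.length := hw
      _ = 2 * (gaifman V Hl T).dist A B := by rw [hp]
  · have hAB : A ≠ B := fun h => hreach (h ▸ SimpleGraph.Reachable.refl _)
    have h0 : (gaifmanDot V Hl T).dist (Sum.inl A) (Sum.inl B) = 0 := by
      apply SimpleGraph.dist_eq_zero_of_not_reachable
      rintro ⟨w⟩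
      exact hreach ((proj_reachable w B rfl).1 A rfl)
    omega
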